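/- Let L₁,…,L_K be closed subspaces of a real Hilbert space H and T = P_K ∘ ⋯ ∘ P₁. Let Y = L₁^⊥ + ⋯ + L_K^⊥ and s the decomposition norm on Y. For y ∈ Y, with vⱼ = Pⱼ^⊥ P_{j-1} ⋯ P₁ y, one has s(T y) ≤ s(y) + Σ_{j=1}^K ‖vⱼ‖ ≤ s(y) + √K · (Σⱼ ‖vⱼ‖²)^{1/2}. -/

import Mathlib

/-- The decomposition norm `s(y) = inf { Σⱼ ‖yⱼ‖ : y = Σⱼ yⱼ, yⱼ ∈ Lⱼ^⊥ }`. -/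
noncomputable def decompNorm {H : Type*} [NormedAddCommGroup H] [InnerProductSpace ℝ H]
    {K : ℕ} (L : Fin K → Submodule ℝ H) (y : H) : ℝ :=
  sInf {r : ℝ | ∃ f : Fin K → H, (∀ j, f j ∈ (L j)ᗮ) ∧ y = ∑ j, f j ∧ r = ∑ j, ‖f j‖}

theorem decompNorm_growth_of_alternating_step
    {H : Type*} [NormedAddCommGroup H] [InnerProductSpace ℝ H] [CompleteSpace H]
    {K : ℕ} (L : Fin K → Submodule ℝ H)
    (hclosed : ∀ k, IsClosed ((L k : Set H))) [∀ k, CompleteSpace (L k)]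
    (y : H) (hy : ∃ f : Fin K → H, (∀ j, f j ∈ (L j)ᗮ) ∧ y = ∑ j, f j)
    (z : ℕ → H) (hz0 : z 0 = y)
    (hz : ∀ j : Fin K, z ((j : ℕ) + 1) = (Submodule.orthogonalProjectionOnto (L j) (z j) : H))
    (v : Fin K → H) (hv : ∀ j : Fin K, v j = z j - z ((j : ℕ) + 1)) :
    decompNorm L (z K) ≤ decompNorm L y + ∑ j, ‖v j‖ ∧
      decompNorm L y + ∑ j, ‖v j‖ ≤
        decompNorm L y + Real.sqrt K * Real.sqrt (∑ j, ‖v j‖ ^ 2) := by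
  have hSne : {r : ℝ | ∃ f : Fin K → H, (∀ j, f j ∈ (L j)ᗮ) ∧ y = ∑ j, f j ∧
      r = ∑ j, ‖f j‖}.Nonempty := by
    obtain ⟨f, hf1, hf2⟩ := hy
    exact ⟨∑ j, ‖f j‖, f, hf1, hf2, rfl⟩
  have hbdd : ∀ w : H, BddBelow {r : ℝ | ∃ f : Fin K → H, (∀ j, f j ∈ (L j)ᗮ) ∧
      w = ∑ j, f j ∧ r = ∑ j, ‖f j‖} := by
    intro w
    refine ⟨0, fun r hr => ?_⟩
    obtain ⟨f, -, -, rfl⟩ := hr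
    positivity
  have htel : ∑ j : Fin K, v j = y - z K := by
    have h1 : ∑ j : Fin K, v j = ∑ j : Fin K, (z j - z ((j : ℕ) + 1)) :=
      Finset.sum_congr rfl fun j _ => hv j
    rw [h1, Fin.sum_univ_eq_sum_range (fun i => z i - z (i + 1)) K,
      Finset.sum_range_sub' (fun i => z i), hz0]
  have hvmem : ∀ j : Fin K, v j ∈ (L j)ᗮ := by
    intro j
    rw [hv j, hz j]
    exact (L j).sub_starProjection_mem_orthogonal _
  constructor
  · have key : decompNorm L (z K) - ∑ j, ‖v j‖ ≤ decompNorm L y := by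
      apply le_csInf hSne
      rintro r ⟨f, hf1, hf2, rfl⟩
      have hle : decompNorm L (z K) ≤ ∑ j, ‖f j - v j‖ := by
        apply csInf_le (hbdd _)
        refine ⟨fun j => f j - v j, fun j => Submodule.sub_mem _ (hf1 j) (hvmem j), ?_, rfl⟩
        rw [Finset.sum_sub_distrib, ← hf2, htel]
        abel
      have hsum : ∑ j, ‖f j - v j‖ ≤ ∑ j, ‖f j‖ + ∑ j, ‖v j‖ := by
        rw [← Finset.sum_add_distrib]
        exact Finset.sum_le_sum fun j _ => norm_sub_le _ _
      linarith
    linarith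
  · have h2 : ∑ j, ‖v j‖ ≤ Real.sqrt K * Real.sqrt (∑ j, ‖v j‖ ^ 2) := by
      have hsq : (∑ j, ‖v j‖) ^ 2 ≤ (K : ℝ) * ∑ j, ‖v j‖ ^ 2 := by
        have := sq_sum_le_card_mul_sum_sq (s := Finset.univ) (f := fun j : Fin K => ‖v j‖)
        simpa using this
      calc ∑ j, ‖v j‖ = Real.sqrt ((∑ j, ‖v j‖) ^ 2) := by
            rw [Real.sqrt_sq (by positivity)]
        _ ≤ Real.sqrt ((K : ℝ) * ∑ j, ‖v j‖ ^ 2) := Real.sqrt_le_sqrt hsq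
        _ = Real.sqrt K * Real.sqrt (∑ j, ‖v j‖ ^ 2) := Real.sqrt_mul (by positivity) _
    linarith
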